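/- Fix ℓ, h with 0 ≤ ℓ ≤ 1/4 ≤ h ≤ 1. For every measurement dependent local distribution P on (a,b,x,y) ∈ {0,1}^4 — i.e., P(a,b,x,y) = ∑_λ ρ(λ) · q_λ(x,y) · α_λ(a,x) · β_λ(b,y) where ρ is a finitely-supported probability weight, q_λ is a probability distribution on {0,1}^2 with ℓ ≤ q_λ(x,y) ≤ h for all x,y, and α_λ(·,x), β_λ(·,y) are conditional probability distributions on {0,1} — the inequality ℓ·P(0,0,0,0) − h·(P(0,1,0,1) + P(1,0,1,0) + P(0,0,1,1)) ≤ 0 holds. -/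
import Mathlib

theorem stmt_7 (ℓ h : ℝ) (hℓ0 : 0 ≤ ℓ) (hℓ : ℓ ≤ 1 / 4) (hh : 1 / 4 ≤ h) (hh1 : h ≤ 1)
    (Λ : Finset ℕ) (ρ : ℕ → ℝ)
    (q : ℕ → Fin 2 → Fin 2 → ℝ)
    (α β : ℕ → Fin 2 → Fin 2 → ℝ)
    (hρ0 : ∀ l ∈ Λ, 0 ≤ ρ l) (hρ1 : ∑ l ∈ Λ, ρ l = 1)
    (hqbd : ∀ l ∈ Λ, ∀ x y, ℓ ≤ q l x y ∧ q l x y ≤ h)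
    (hqsum : ∀ l ∈ Λ, ∑ x : Fin 2, ∑ y : Fin 2, q l x y = 1)
    (hα0 : ∀ l ∈ Λ, ∀ a x, 0 ≤ α l a x)
    (hα1 : ∀ l ∈ Λ, ∀ x, ∑ a : Fin 2, α l a x = 1)
    (hβ0 : ∀ l ∈ Λ, ∀ b y, 0 ≤ β l b y)
    (hβ1 : ∀ l ∈ Λ, ∀ y, ∑ b : Fin 2, β l b y = 1)
    (P : Fin 2 → Fin 2 → Fin 2 → Fin 2 → ℝ)
    (hP : ∀ a b x y, P a b x y = ∑ l ∈ Λ, ρ l * q l x y * α l a x * β l b y) :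
    ℓ * P 0 0 0 0 - h * (P 0 1 0 1 + P 1 0 1 0 + P 0 0 1 1) ≤ 0 := by
  have h0 : (0:ℝ) ≤ h := by linarith
  have key : ℓ * P 0 0 0 0 - h * (P 0 1 0 1 + P 1 0 1 0 + P 0 0 1 1)
      = ∑ l ∈ Λ, (ℓ * (ρ l * q l 0 0 * α l 0 0 * β l 0 0)
          - h * (ρ l * q l 0 1 * α l 0 0 * β l 1 1
            + ρ l * q l 1 0 * α l 1 1 * β l 0 0
            + ρ l * q l 1 1 * α l 0 1 * β l 0 1)) := by
    simp only [hP, Finset.mul_sum, ← Finset.sum_add_distrib, ← Finset.sum_sub_distrib]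
  rw [key]
  apply Finset.sum_nonpos
  intro l hl
  have hρ := hρ0 l hl
  have hsa0 := hα1 l hl 0
  have hsa1 := hα1 l hl 1
  have hsb0 := hβ1 l hl 0
  have hsb1 := hβ1 l hl 1
  simp [Fin.sum_univ_two] at hsa0 hsa1 hsb0 hsb1
  have ha00 := hα0 l hl 0 0
  have ha10 := hα0 l hl 1 0
  have ha01 := hα0 l hl 0 1
  have ha11 := hα0 l hl 1 1
  have hb00 := hβ0 l hl 0 0
  have hb10 := hβ0 l hl 1 0
  have hb01 := hβ0 l hl 0 1
  have hb11 := hβ0 l hl 1 1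
  have hq00 := (hqbd l hl 0 0).2
  have hq01 := (hqbd l hl 0 1).1
  have hq10 := (hqbd l hl 1 0).1
  have hq11 := (hqbd l hl 1 1).1
  have ha00le : α l 0 0 ≤ 1 := by linarith
  have hb00le : β l 0 0 ≤ 1 := by linarith
  -- key pointwise inequality
  have e11a : α l 1 1 = 1 - α l 0 1 := by linarith
  have e11b : β l 1 1 = 1 - β l 0 1 := by linarith
  have hkey : α l 0 0 * β l 0 0 ≤ α l 0 0 * β l 1 1 + α l 1 1 * β l 0 0
      + α l 0 1 * β l 0 1 := by
    rw [e11a, e11b]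
    nlinarith [mul_nonneg (mul_nonneg (by linarith : (0:ℝ) ≤ 1 - α l 0 0) hb00) (by linarith : (0:ℝ) ≤ 1 - α l 0 1),
      mul_nonneg (mul_nonneg (by linarith : (0:ℝ) ≤ 1 - α l 0 0) ha01) hb01,
      mul_nonneg (mul_nonneg ha00 (by linarith : (0:ℝ) ≤ 1 - α l 0 1)) (by linarith : (0:ℝ) ≤ 1 - β l 0 1),
      mul_nonneg (mul_nonneg ha00 ha01) (by linarith : (0:ℝ) ≤ 1 - β l 0 0)]
  have inner : ℓ * (q l 0 0 * α l 0 0 * β l 0 0)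
      - h * (q l 0 1 * α l 0 0 * β l 1 1 + q l 1 0 * α l 1 1 * β l 0 0
        + q l 1 1 * α l 0 1 * β l 0 1) ≤ 0 := by
    nlinarith [mul_nonneg (mul_nonneg (mul_nonneg (by linarith : (0:ℝ) ≤ h - q l 0 0) hℓ0) ha00) hb00,
      mul_nonneg (mul_nonneg h0 hℓ0) (by linarith [hkey] : (0:ℝ) ≤ α l 0 0 * β l 1 1 + α l 1 1 * β l 0 0 + α l 0 1 * β l 0 1 - α l 0 0 * β l 0 0),
      mul_nonneg (mul_nonneg (mul_nonneg h0 (by linarith : (0:ℝ) ≤ q l 0 1 - ℓ)) ha00) hb11,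
      mul_nonneg (mul_nonneg (mul_nonneg h0 (by linarith : (0:ℝ) ≤ q l 1 0 - ℓ)) ha11) hb00,
      mul_nonneg (mul_nonneg (mul_nonneg h0 (by linarith : (0:ℝ) ≤ q l 1 1 - ℓ)) ha01) hb01]
  nlinarith [mul_nonneg hρ (by linarith [inner] : (0:ℝ) ≤ h * (q l 0 1 * α l 0 0 * β l 1 1 + q l 1 0 * α l 1 1 * β l 0 0 + q l 1 1 * α l 0 1 * β l 0 1) - ℓ * (q l 0 0 * α l 0 0 * β l 0 0))]
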